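/- Let Ω ⊆ ℝⁿ be a nonempty measurable set, K an admissible kernel, ρ a recognition function satisfying the coordination condition, and u₀ : Ω → ℝ bounded continuous. Then for every T > 0 there exists exactly one bounded continuous u : Ω × [0,T] → ℝ satisfying u(x,t) = u₀(x) + ∫₀ᵗ g[u](x,s) ds for all (x,t) ∈ Ω × [0,T]; i.e., the initial value problem has a unique continuous bounded solution on every finite time interval. -/

import Mathlib

open MeasureTheory Set


lemma sup_gronwall {ι : Type*} [Nonempty ι] {T c C : ℝ} (hc : 0 ≤ c) (hC : 0 ≤ C)
    (ψ G : ι → ℝ → ℝ)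
    (hbdd : ∀ t ∈ Icc (0:ℝ) T, BddAbove (Set.range fun i => ψ i t))
    (hInt : ∀ i, ∀ t₀ t : ℝ, 0 ≤ t₀ → t₀ ≤ t → t ≤ T →
      IntervalIntegrable (G i) MeasureTheory.volume t₀ t)
    (heq : ∀ i, ∀ t₀ t : ℝ, 0 ≤ t₀ → t₀ ≤ t → t ≤ T →
      ψ i t = ψ i t₀ + ∫ s in t₀..t, G i s)
    (hGb : ∀ i, ∀ t ∈ Icc (0:ℝ) T, |G i t| ≤ C)
    (hGle : ∀ i, ∀ t ∈ Icc (0:ℝ) T, G i t ≤ c * ((⨆ j, ψ j t) - ψ i t)) :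
    ∀ t ∈ Icc (0:ℝ) T, (⨆ i, ψ i t) ≤ ⨆ i, ψ i 0 := by
  set S : ℝ → ℝ := fun t => ⨆ i, ψ i t with hS
  have hψle : ∀ t ∈ Icc (0:ℝ) T, ∀ i, ψ i t ≤ S t := by
    intro t ht i; exact le_ciSup (hbdd t ht) i
  -- Lipschitz bound on each ψ i
  have hψLip : ∀ i, ∀ t₀ t : ℝ, 0 ≤ t₀ → t₀ ≤ t → t ≤ T →
      |ψ i t - ψ i t₀| ≤ C * (t - t₀) := by
    intro i t₀ t h0 h1 h2
    have e := heq i t₀ t h0 h1 h2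
    have hb : ‖∫ s in t₀..t, G i s‖ ≤ C * |t - t₀| := by
      apply intervalIntegral.norm_integral_le_of_norm_le_const
      intro x hx
      rw [uIoc_of_le h1] at hx
      exact hGb i x ⟨le_trans h0 hx.1.le, hx.2.trans h2⟩
    rw [abs_of_nonneg (by linarith)] at hb
    calc |ψ i t - ψ i t₀| = ‖∫ s in t₀..t, G i s‖ := by rw [e]; simp [Real.norm_eq_abs]
    _ ≤ C * (t - t₀) := hb
  -- S is Lipschitz hence continuous on Icc 0 T
  have hSLip : ∀ t₀ t : ℝ, 0 ≤ t₀ → t₀ ≤ t → t ≤ T → |S t - S t₀| ≤ C * (t - t₀) := by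
    intro t₀ t h0 h1 h2
    rw [abs_sub_le_iff]
    constructor
    · have : ∀ i, ψ i t ≤ S t₀ + C * (t - t₀) := by
        intro i
        have := hψLip i t₀ t h0 h1 h2
        have h3 := hψle t₀ ⟨h0, h1.trans h2⟩ i
        have := abs_le.1 this
        linarith [this.2]
      have := ciSup_le this
      linarith
    · have : ∀ i, ψ i t₀ ≤ S t + C * (t - t₀) := by
        intro i
        have := hψLip i t₀ t h0 h1 h2
        have h3 := hψle t ⟨h0.trans h1, h2⟩ i
        have := abs_le.1 this
        linarith [this.1]
      have := ciSup_le this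
      linarith
  have hScont : ContinuousOn S (Icc 0 T) := by
    apply LipschitzOnWith.continuousOn (K := Real.toNNReal C)
    rw [lipschitzOnWith_iff_dist_le_mul]
    intro x hx y hy
    rw [Real.dist_eq, Real.dist_eq]
    have key : |S x - S y| ≤ C * |x - y| := by
      rcases le_total y x with h | h
      · have h2 := hSLip y x hy.1 h hx.2
        rw [abs_of_nonneg (by linarith : (0:ℝ) ≤ x - y)]
        exact h2
      · have h2 := hSLip x y hx.1 h hy.2
        rw [abs_sub_comm (S x), abs_sub_comm x, abs_of_nonneg (by linarith : (0:ℝ) ≤ y - x)]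
        exact h2
    calc |S x - S y| ≤ C * |x - y| := key
    _ ≤ Real.toNNReal C * |x - y| :=
        mul_le_mul_of_nonneg_right (Real.le_coe_toNNReal C) (abs_nonneg _)
  intro t ht
  have hT0 : (0:ℝ) ≤ T := le_trans ht.1 ht.2
  refine le_of_forall_pos_le_add ?_
  intro η hη
  set ε : ℝ := η / (1 + T) with hεdef
  have hε : 0 < ε := div_pos hη (by linarith)
  have main : S t ≤ S 0 + ε + ε * t := by
    by_contra hcon
    push_neg at hcon
    set A : Set ℝ := {s | s ∈ Icc (0:ℝ) T ∧ S 0 + ε + ε * s ≤ S s} with hA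
    have hAne : A.Nonempty := ⟨t, ht, hcon.le⟩
    have hAbdd : BddBelow A := ⟨0, fun s hs => hs.1.1⟩
    have hAclosed : IsClosed A := by
      have : A = Icc 0 T ∩ (fun s => S s - (S 0 + ε + ε * s)) ⁻¹' (Ici 0) := by
        ext s; simp only [hA, mem_setOf_eq, mem_inter_iff, mem_preimage, mem_Ici]
        constructor
        · rintro ⟨h1, h2⟩; exact ⟨h1, by linarith⟩
        · rintro ⟨h1, h2⟩; exact ⟨h1, by linarith⟩
      rw [this]
      refine ContinuousOn.preimage_isClosed_of_isClosed ?_ isClosed_Icc isClosed_Ici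
      exact hScont.sub (continuousOn_const.add (continuousOn_const.mul continuousOn_id))
    set tstar := sInf A with htstar
    have htA : tstar ∈ A := hAclosed.csInf_mem hAne hAbdd
    have htIcc : tstar ∈ Icc (0:ℝ) T := htA.1
    have hBS : S 0 + ε + ε * tstar ≤ S tstar := htA.2
    have htpos : 0 < tstar := by
      rcases lt_or_eq_of_le htIcc.1 with h | h
      · exact h
      · exfalso; rw [← h] at hBS; simp at hBS; linarith
    set h : ℝ := min tstar (ε / (c * C + 1)) with hh0
    have hhpos : 0 < h := lt_min htpos (div_pos hε (by positivity))
    have hhle : h ≤ tstar := min_le_left _ _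
    have hh2 : h ≤ ε / (c * C + 1) := min_le_right _ _
    set t₀ : ℝ := tstar - h with ht₀def
    have ht₀0 : 0 ≤ t₀ := by simp only [ht₀def]; linarith
    have ht₀lt : t₀ < tstar := by simp only [ht₀def]; linarith
    have hSB : ∀ s, 0 ≤ s → s < tstar → S s < S 0 + ε + ε * s := by
      intro s hs0 hslt
      have : s ∉ A := notMem_of_lt_csInf hslt hAbdd
      simp only [hA, mem_setOf_eq, not_and, not_le] at this
      exact this ⟨hs0, le_of_lt (lt_of_lt_of_le hslt htIcc.2)⟩
    set Bstar : ℝ := S 0 + ε + ε * tstar with hBstar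
    have hkey : ∀ i, ψ i tstar ≤ ψ i t₀ + (c * (Bstar - ψ i tstar + C * h)) * h := by
      intro i
      have e := heq i t₀ tstar ht₀0 ht₀lt.le htIcc.2
      have hae : G i ≤ᵐ[volume.restrict (Icc t₀ tstar)]
          fun _ => c * (Bstar - ψ i tstar + C * h) := by
        have h1 : ∀ᵐ s ∂volume.restrict (Icc t₀ tstar), s ∈ Icc t₀ tstar :=
          ae_restrict_mem measurableSet_Icc
        have h2 : ∀ᵐ s ∂volume.restrict (Icc t₀ tstar), s ≠ tstar := by
          refine ae_restrict_of_ae ?_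
          have : (volume : Measure ℝ) {tstar} = 0 := Real.volume_singleton
          rw [ae_iff]
          convert this using 2
          ext s; simp
        filter_upwards [h1, h2] with s hs hsne
        have hsIcc : s ∈ Icc (0:ℝ) T :=
          ⟨le_trans ht₀0 hs.1, le_trans hs.2 htIcc.2⟩
        have hslt : s < tstar := lt_of_le_of_ne hs.2 hsne
        have g1 : G i s ≤ c * (S s - ψ i s) := hGle i s hsIcc
        have g2 : S s < S 0 + ε + ε * s := hSB s hsIcc.1 hslt
        have g3 : ψ i tstar - ψ i s ≤ C * (tstar - s) := by
          have := abs_le.1 (hψLip i s tstar hsIcc.1 hs.2 htIcc.2)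
          linarith [this.2]
        have g4 : ε * s ≤ ε * tstar := by
          apply mul_le_mul_of_nonneg_left hs.2 hε.le
        have g5 : C * (tstar - s) ≤ C * h := by
          apply mul_le_mul_of_nonneg_left _ hC
          simp only [ht₀def] at hs ⊢; linarith [hs.1]
        have : S s - ψ i s ≤ Bstar - ψ i tstar + C * h := by
          simp only [hBstar]; linarith
        calc G i s ≤ c * (S s - ψ i s) := g1
        _ ≤ c * (Bstar - ψ i tstar + C * h) := mul_le_mul_of_nonneg_left this hc
      have hint1 : IntervalIntegrable (G i) volume t₀ tstar :=
        hInt i t₀ tstar ht₀0 ht₀lt.le htIcc.2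
      have hint2 : IntervalIntegrable (fun _ : ℝ => c * (Bstar - ψ i tstar + C * h))
          volume t₀ tstar := intervalIntegrable_const
      have := intervalIntegral.integral_mono_ae_restrict ht₀lt.le hint1 hint2 hae
      rw [intervalIntegral.integral_const] at this
      have hts : tstar - t₀ = h := by simp [ht₀def]
      rw [hts] at this
      simp only [smul_eq_mul] at this
      calc ψ i tstar = ψ i t₀ + ∫ s in t₀..tstar, G i s := e
      _ ≤ ψ i t₀ + h * (c * (Bstar - ψ i tstar + C * h)) := by linarith [this]
      _ = ψ i t₀ + (c * (Bstar - ψ i tstar + C * h)) * h := by ring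
    -- take sup over i
    have hsup : S tstar * (1 + c * h) ≤ S t₀ + c * h * Bstar + c * C * h * h := by
      have hpos : 0 < 1 + c * h := by positivity
      have : ∀ i, ψ i tstar ≤ (S t₀ + c * h * Bstar + c * C * h * h) / (1 + c * h) := by
        intro i
        rw [le_div_iff₀ hpos]
        have h1 := hkey i
        have h2 := hψle t₀ ⟨ht₀0, le_trans ht₀lt.le htIcc.2⟩ i
        nlinarith [h1, h2]
      have := ciSup_le this
      rw [le_div_iff₀ hpos] at this
      linarith [this]
    have hSt₀ : S t₀ < Bstar - ε * h := by
      have := hSB t₀ ht₀0 ht₀lt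
      simp only [hBstar, ht₀def]
      have : S (tstar - h) < S 0 + ε + ε * (tstar - h) := hSB _ ht₀0 ht₀lt
      ring_nf
      ring_nf at this
      linarith
    have hfinal : ε ≤ c * C * h := by
      have k1 : c * h * Bstar ≤ c * h * S tstar :=
        mul_le_mul_of_nonneg_left hBS (by positivity)
      refine (mul_le_mul_iff_of_pos_right hhpos).mp ?_
      linarith [hsup, hSt₀, k1, hBS]
    have : c * C * h ≤ c * C * (ε / (c * C + 1)) :=
      mul_le_mul_of_nonneg_left hh2 (by positivity)
    have hlt : c * C * (ε / (c * C + 1)) < ε := by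
      rw [mul_div_assoc']
      rw [div_lt_iff₀ (by positivity)]
      nlinarith [hε]
    linarith
  have : ε + ε * t ≤ η := by
    have h1 : ε * (1 + t) ≤ ε * (1 + T) := by
      apply mul_le_mul_of_nonneg_left _ hε.le
      linarith [ht.2]
    have h2 : ε * (1 + T) = η := by
      rw [hεdef]; field_simp
    nlinarith
  linarith


namespace Stmt5

noncomputable section

variable {n : ℕ} {Ω : Set (EuclideanSpace ℝ (Fin n))} {T : ℝ}

/-- A function which is Lipschitz on every symmetric compact interval is continuous. -/
lemma cont_of_locLip (f : ℝ → ℝ)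
    (hf : ∀ R : ℝ, 0 < R → ∃ L : ℝ, ∀ a b : ℝ, |a| ≤ R → |b| ≤ R →
      |f a - f b| ≤ L * |a - b|) : Continuous f := by
  rw [Metric.continuous_iff]
  intro a ε hε
  obtain ⟨L, hL⟩ := hf (|a| + 1) (by positivity)
  refine ⟨min 1 (ε / (|L| + 1)), lt_min one_pos (by positivity), fun x hx => ?_⟩
  rw [Real.dist_eq] at hx ⊢
  have h1 : |x - a| < 1 := lt_of_lt_of_le hx (min_le_left _ _)
  have h2 : |x| ≤ |a| + 1 := by
    have := abs_sub_abs_le_abs_sub x a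
    linarith
  have h3 := hL x a h2 (by linarith [abs_nonneg a])
  have h4 : L * |x - a| ≤ |L| * |x - a| :=
    mul_le_mul_of_nonneg_right (le_abs_self L) (abs_nonneg _)
  have h5 : |L| * |x - a| < (|L| + 1) * (ε / (|L| + 1)) := by
    apply lt_of_le_of_lt (b := (|L| + 1) * |x - a|)
    · apply mul_le_mul_of_nonneg_right _ (abs_nonneg _); linarith
    · apply mul_lt_mul_of_pos_left (lt_of_lt_of_le hx (min_le_right _ _)) (by positivity)
  have h6 : (|L| + 1) * (ε / (|L| + 1)) = ε := by field_simp
  linarith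
/-- The space of bounded continuous functions on `Ω × [0,T]`. -/
abbrev Yt (Ω : Set (EuclideanSpace ℝ (Fin n))) (T : ℝ) : Type _ :=
  BoundedContinuousFunction (↥Ω × ↥(Icc (0:ℝ) T)) ℝ

open scoped Classical in
/-- Evaluation of an element of `Yt` as a function on the ambient space. -/
def eVa (W : Yt Ω T) (x : EuclideanSpace ℝ (Fin n)) (t : ℝ) : ℝ :=
  if h : x ∈ Ω ∧ t ∈ Icc (0:ℝ) T then W (⟨x, h.1⟩, ⟨t, h.2⟩) else 0

lemma eVa_eq (W : Yt Ω T) {x : EuclideanSpace ℝ (Fin n)} {t : ℝ}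
    (hx : x ∈ Ω) (ht : t ∈ Icc (0:ℝ) T) : eVa W x t = W (⟨x, hx⟩, ⟨t, ht⟩) :=
  dif_pos ⟨hx, ht⟩

lemma eVa_abs_le (W : Yt Ω T) (x : EuclideanSpace ℝ (Fin n)) (t : ℝ) :
    |eVa W x t| ≤ ‖W‖ := by
  unfold eVa
  split
  · rw [← Real.norm_eq_abs]; exact W.norm_coe_le_norm _
  · simp only [abs_zero]; exact norm_nonneg W

lemma eVa_of_not (W : Yt Ω T) {x : EuclideanSpace ℝ (Fin n)} {t : ℝ}
    (h : ¬(x ∈ Ω ∧ t ∈ Icc (0:ℝ) T)) : eVa W x t = 0 := dif_neg h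

lemma eVa_neg (W : Yt Ω T) (x : EuclideanSpace ℝ (Fin n)) (t : ℝ) :
    eVa (-W) x t = - eVa W x t := by
  unfold eVa
  split <;> simp

lemma eVa_contOn (W : Yt Ω T) (t : ℝ) :
    ContinuousOn (fun y => eVa W y t) Ω := by
  by_cases ht : t ∈ Icc (0:ℝ) T
  · rw [continuousOn_iff_continuous_restrict]
    have he : (Ω.domRestrict fun y => eVa W y t) = fun y : ↥Ω => W (y, ⟨t, ht⟩) := by
      funext y
      simp only [Set.domRestrict_apply]
      exact eVa_eq W y.2 ht
    rw [he]
    exact W.continuous.comp (Continuous.prodMk continuous_id continuous_const)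
  · have he : EqOn (fun y => eVa W y t) (fun _ => (0:ℝ)) Ω := by
      intro y _
      simp only [eVa]
      rw [dif_neg (by tauto)]
    exact ContinuousOn.congr continuousOn_const he

lemma eVa_contIcc (W : Yt Ω T) {x : EuclideanSpace ℝ (Fin n)} (hx : x ∈ Ω) :
    Continuous fun s : ↥(Icc (0:ℝ) T) => eVa W x ↑s := by
  have he : (fun s : ↥(Icc (0:ℝ) T) => eVa W x ↑s) = fun s => W (⟨x, hx⟩, s) := by
    funext s
    exact eVa_eq W hx s.2
  rw [he]
  exact W.continuous.comp (Continuous.prodMk continuous_const continuous_id)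

lemma eVa_diff_le (W V : Yt Ω T) {Q : ℝ} (hQ0 : 0 ≤ Q)
    (hQ : ∀ p : ↥Ω × ↥(Icc (0:ℝ) T), |W p - V p| ≤ Q)
    (x : EuclideanSpace ℝ (Fin n)) (t : ℝ) : |eVa W x t - eVa V x t| ≤ Q := by
  unfold eVa
  split
  · exact hQ _
  · simpa using hQ0

variable (K : EuclideanSpace ℝ (Fin n) → EuclideanSpace ℝ (Fin n) → ℝ)

/-- The nonlocal interaction functional. -/
def gga (τ : ℝ → ℝ) (W : Yt Ω T) (x : EuclideanSpace ℝ (Fin n)) (s : ℝ) : ℝ :=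
  ∫ y in Ω, K x y * τ (eVa W x s - eVa W y s)

variable {K}

lemma gga_neg (τ : ℝ → ℝ) (W : Yt Ω T) (x : EuclideanSpace ℝ (Fin n)) (s : ℝ) :
    gga K (fun z => -τ (-z)) (-W) x s = - gga K τ W x s := by
  unfold gga
  rw [← integral_neg]
  congr 1
  funext y
  rw [eVa_neg, eVa_neg]
  show K x y * (-τ (-(- eVa W x s - - eVa W y s))) = -(K x y * τ (eVa W x s - eVa W y s))
  have e : -(- eVa W x s - - eVa W y s) = eVa W x s - eVa W y s := by ring
  rw [e]
  ring

section gg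

variable (hΩmeas : MeasurableSet Ω)
  (hKnonneg : ∀ x y, 0 ≤ K x y)
  (hKmeas : Measurable (Function.uncurry K))
  (hKint : ∀ x ∈ Ω, IntegrableOn (K x) Ω)
  {D : ℝ} (hD : ∀ x ∈ Ω, (∫ y in Ω, K x y) ≤ D)
  {τ : ℝ → ℝ} (hτcont : Continuous τ)
  {W : Yt Ω T} {B : ℝ} (hτb : ∀ z : ℝ, |z| ≤ 2 * ‖W‖ → |τ z| ≤ B)

lemma arg_le (W : Yt Ω T) (x y : EuclideanSpace ℝ (Fin n)) (s : ℝ) :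
    |eVa W x s - eVa W y s| ≤ 2 * ‖W‖ := by
  calc |eVa W x s - eVa W y s| ≤ |eVa W x s| + |eVa W y s| := abs_sub _ _
  _ ≤ ‖W‖ + ‖W‖ := add_le_add (eVa_abs_le W x s) (eVa_abs_le W y s)
  _ = 2 * ‖W‖ := by ring

include hΩmeas hKmeas hτcont in
lemma integrand_aesm (x : EuclideanSpace ℝ (Fin n)) (s : ℝ) :
    AEStronglyMeasurable (fun y => K x y * τ (eVa W x s - eVa W y s))
      (volume.restrict Ω) := by
  refine AEStronglyMeasurable.mul ?_ ?_
  · exact (hKmeas.comp measurable_prodMk_left).aestronglyMeasurable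
  · exact ((hτcont.comp_continuousOn
      (continuousOn_const.sub (eVa_contOn W s))).aestronglyMeasurable hΩmeas)

include hKnonneg hτb in
lemma integrand_bd (x : EuclideanSpace ℝ (Fin n)) (s : ℝ) :
    ∀ y : EuclideanSpace ℝ (Fin n),
      ‖K x y * τ (eVa W x s - eVa W y s)‖ ≤ K x y * B := by
  intro y
  rw [Real.norm_eq_abs, abs_mul, abs_of_nonneg (hKnonneg x y)]
  exact mul_le_mul_of_nonneg_left (hτb _ (arg_le W x y s)) (hKnonneg x y)

include hΩmeas hKnonneg hKmeas hKint hτcont hτb in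
lemma integrand_int {x : EuclideanSpace ℝ (Fin n)} (hx : x ∈ Ω) (s : ℝ) :
    IntegrableOn (fun y => K x y * τ (eVa W x s - eVa W y s)) Ω := by
  refine Integrable.mono' ((hKint x hx).mul_const B)
    (integrand_aesm hΩmeas hKmeas hτcont x s)
    (Filter.Eventually.of_forall (integrand_bd hKnonneg hτb x s))

include hΩmeas hKnonneg hKmeas hKint hτcont hτb hD in
lemma gga_abs_le {x : EuclideanSpace ℝ (Fin n)} (hx : x ∈ Ω) (hB0 : 0 ≤ B) (s : ℝ) :
    |gga K τ W x s| ≤ D * B := by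
  have h1 : ‖∫ y in Ω, K x y * τ (eVa W x s - eVa W y s)‖ ≤
      ∫ y in Ω, K x y * B := by
    refine norm_integral_le_of_norm_le ((hKint x hx).mul_const B)
      (Filter.Eventually.of_forall (integrand_bd hKnonneg hτb x s))
  rw [Real.norm_eq_abs] at h1
  calc |gga K τ W x s| ≤ ∫ y in Ω, K x y * B := h1
  _ = (∫ y in Ω, K x y) * B := by rw [integral_mul_const]
  _ ≤ D * B := mul_le_mul_of_nonneg_right (hD x hx) hB0

include hΩmeas hKnonneg hKmeas hKint hτcont hτb in
lemma gga_contIcc {x : EuclideanSpace ℝ (Fin n)} (hx : x ∈ Ω) :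
    Continuous fun s : ↥(Icc (0:ℝ) T) => gga K τ W x ↑s := by
  refine continuous_of_dominated
    (F := fun (s : ↥(Icc (0:ℝ) T)) y => K x y * τ (eVa W x ↑s - eVa W y ↑s))
    (bound := fun y => K x y * B) ?_ ?_ ?_ ?_
  · exact fun s => integrand_aesm hΩmeas hKmeas hτcont x ↑s
  · exact fun s => Filter.Eventually.of_forall (integrand_bd hKnonneg hτb x ↑s)
  · exact (hKint x hx).mul_const B
  · refine (ae_restrict_mem hΩmeas).mono fun y hy => ?_
    refine continuous_const.mul (hτcont.comp ?_)
    exact (eVa_contIcc W hx).sub (eVa_contIcc W hy)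

include hΩmeas hKnonneg hKmeas hKint hτcont hτb in
lemma gga_contOn {x : EuclideanSpace ℝ (Fin n)} (hx : x ∈ Ω) :
    ContinuousOn (fun s => gga K τ W x s) (Icc (0:ℝ) T) := by
  rw [continuousOn_iff_continuous_restrict]
  exact gga_contIcc hΩmeas hKnonneg hKmeas hKint hτcont hτb hx

include hΩmeas hKnonneg hKmeas hKint hτcont hτb hD in
lemma gga_le_sup [Nonempty ↥Ω] {Lτ : ℝ} (hLτ : 0 ≤ Lτ) (hD0 : 0 ≤ D)
    (hle : ∀ p q s' : ℝ, |p| ≤ ‖W‖ → |q| ≤ ‖W‖ → p ≤ s' → q ≤ s' →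
      τ (p - q) ≤ Lτ * (s' - p))
    {x : EuclideanSpace ℝ (Fin n)} (hx : x ∈ Ω) (s : ℝ) :
    gga K τ W x s ≤ D * Lτ * ((⨆ j : ↥Ω, eVa W ↑j s) - eVa W x s) := by
  set S := ⨆ j : ↥Ω, eVa W ↑j s with hSdef
  have hbdd : BddAbove (range fun j : ↥Ω => eVa W ↑j s) := by
    refine ⟨‖W‖, ?_⟩
    rintro _ ⟨j, rfl⟩
    exact le_trans (le_abs_self _) (eVa_abs_le W ↑j s)
  have hSx : eVa W x s ≤ S := le_ciSup hbdd ⟨x, hx⟩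
  have key : ∀ y ∈ Ω, K x y * τ (eVa W x s - eVa W y s) ≤
      K x y * (Lτ * (S - eVa W x s)) := by
    intro y hy
    refine mul_le_mul_of_nonneg_left ?_ (hKnonneg x y)
    exact hle _ _ _ (eVa_abs_le W x s) (eVa_abs_le W y s) hSx (le_ciSup hbdd ⟨y, hy⟩)
  calc gga K τ W x s ≤ ∫ y in Ω, K x y * (Lτ * (S - eVa W x s)) := by
        refine setIntegral_mono_on (integrand_int hΩmeas hKnonneg hKmeas hKint hτcont hτb hx s)
          ((hKint x hx).mul_const _) hΩmeas key
  _ = (∫ y in Ω, K x y) * (Lτ * (S - eVa W x s)) := by rw [integral_mul_const]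
  _ ≤ D * (Lτ * (S - eVa W x s)) :=
      mul_le_mul_of_nonneg_right (hD x hx) (mul_nonneg hLτ (sub_nonneg.2 hSx))
  _ = D * Lτ * (S - eVa W x s) := by ring

end gg

section diff

variable (hΩmeas : MeasurableSet Ω)
  (hKnonneg : ∀ x y, 0 ≤ K x y)
  (hKmeas : Measurable (Function.uncurry K))
  (hKint : ∀ x ∈ Ω, IntegrableOn (K x) Ω)
  {D : ℝ} (hD : ∀ x ∈ Ω, (∫ y in Ω, K x y) ≤ D)
  {τ : ℝ → ℝ} (hτcont : Continuous τ)

include hΩmeas hKnonneg hKmeas hKint hD hτcont in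
lemma gga_diff {W V : Yt Ω T} {BW BV : ℝ}
    (hτbW : ∀ z : ℝ, |z| ≤ 2 * ‖W‖ → |τ z| ≤ BW)
    (hτbV : ∀ z : ℝ, |z| ≤ 2 * ‖V‖ → |τ z| ≤ BV)
    {L Q : ℝ} (hL0 : 0 ≤ L) (hQ0 : 0 ≤ Q)
    (hτlip : ∀ a b : ℝ, |a| ≤ 2 * ‖W‖ → |b| ≤ 2 * ‖V‖ → |τ a - τ b| ≤ L * |a - b|)
    {x : EuclideanSpace ℝ (Fin n)} (hx : x ∈ Ω) {s : ℝ}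
    (hQ : ∀ x' : EuclideanSpace ℝ (Fin n), |eVa W x' s - eVa V x' s| ≤ Q) :
    |gga K τ W x s - gga K τ V x s| ≤ D * (L * (2 * Q)) := by
  have hiW := integrand_int hΩmeas hKnonneg hKmeas hKint hτcont hτbW hx s
  have hiV := integrand_int hΩmeas hKnonneg hKmeas hKint hτcont hτbV hx s
  have e : gga K τ W x s - gga K τ V x s =
      ∫ y in Ω, (K x y * τ (eVa W x s - eVa W y s) -
                 K x y * τ (eVa V x s - eVa V y s)) := (integral_sub hiW hiV).symm
  rw [e]
  have h1 : ‖∫ y in Ω, (K x y * τ (eVa W x s - eVa W y s) -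
      K x y * τ (eVa V x s - eVa V y s))‖ ≤ ∫ y in Ω, K x y * (L * (2 * Q)) := by
    refine norm_integral_le_of_norm_le ((hKint x hx).mul_const _)
      (Filter.Eventually.of_forall fun y => ?_)
    rw [← mul_sub, Real.norm_eq_abs, abs_mul, abs_of_nonneg (hKnonneg x y)]
    refine mul_le_mul_of_nonneg_left ?_ (hKnonneg x y)
    have h2 := hτlip _ _ (arg_le W x y s) (arg_le V x y s)
    have h3 : |(eVa W x s - eVa W y s) - (eVa V x s - eVa V y s)| ≤ 2 * Q := by
      have d1 := hQ x
      have d2 := hQ y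
      calc |(eVa W x s - eVa W y s) - (eVa V x s - eVa V y s)|
          = |(eVa W x s - eVa V x s) - (eVa W y s - eVa V y s)| := by ring_nf
      _ ≤ |eVa W x s - eVa V x s| + |eVa W y s - eVa V y s| := abs_sub _ _
      _ ≤ 2 * Q := by linarith
    calc |τ (eVa W x s - eVa W y s) - τ (eVa V x s - eVa V y s)|
        ≤ L * |(eVa W x s - eVa W y s) - (eVa V x s - eVa V y s)| := h2
    _ ≤ L * (2 * Q) := mul_le_mul_of_nonneg_left h3 hL0
  rw [Real.norm_eq_abs] at h1
  calc |∫ y in Ω, (K x y * τ (eVa W x s - eVa W y s) -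
      K x y * τ (eVa V x s - eVa V y s))| ≤ ∫ y in Ω, K x y * (L * (2 * Q)) := h1
  _ = (∫ y in Ω, K x y) * (L * (2 * Q)) := by rw [integral_mul_const]
  _ ≤ D * (L * (2 * Q)) := mul_le_mul_of_nonneg_right (hD x hx) (by positivity)

end diff

section Phi

/-- The Picard map, as a plain function. -/
def PhiFun (u₀ : EuclideanSpace ℝ (Fin n) → ℝ)
    (K : EuclideanSpace ℝ (Fin n) → EuclideanSpace ℝ (Fin n) → ℝ)
    (τ : ℝ → ℝ) (W : Yt Ω T) : ↥Ω × ↥(Icc (0:ℝ) T) → ℝ :=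
  fun p => u₀ ↑p.1 + ∫ s in (0:ℝ)..(↑p.2 : ℝ), gga K τ W ↑p.1 s

variable {u₀ : EuclideanSpace ℝ (Fin n) → ℝ}

variable (hΩmeas : MeasurableSet Ω)
  (hKnonneg : ∀ x y, 0 ≤ K x y)
  (hKmeas : Measurable (Function.uncurry K))
  (hKint : ∀ x ∈ Ω, IntegrableOn (K x) Ω)
  {D : ℝ} (hD : ∀ x ∈ Ω, (∫ y in Ω, K x y) ≤ D)
  {τ : ℝ → ℝ} (hτcont : Continuous τ)
  {W : Yt Ω T} {B : ℝ} (hτb : ∀ z : ℝ, |z| ≤ 2 * ‖W‖ → |τ z| ≤ B)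

include hΩmeas hKnonneg hKmeas hKint hD hτcont hτb in
lemma intIntegral_gga_abs_le {x : EuclideanSpace ℝ (Fin n)} (hx : x ∈ Ω) (hB0 : 0 ≤ B)
    (a b : ℝ) : ‖∫ s in a..b, gga K τ W x s‖ ≤ D * B * |b - a| := by
  refine intervalIntegral.norm_integral_le_of_norm_le_const fun s _ => ?_
  rw [Real.norm_eq_abs]
  exact gga_abs_le hΩmeas hKnonneg hKmeas hKint hD hτcont hτb hx hB0 s

include hΩmeas hKnonneg hKmeas hKint hD hτcont hτb in
lemma PhiFun_bound {M₀ : ℝ} (hu₀bd : ∀ x ∈ Ω, |u₀ x| ≤ M₀) (hB0 : 0 ≤ B) (hT0 : 0 ≤ T)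
    (hD0 : 0 ≤ D) : ∀ p, ‖PhiFun u₀ K τ W p‖ ≤ M₀ + D * B * T := by
  intro p
  rw [Real.norm_eq_abs, PhiFun]
  calc |u₀ ↑p.1 + ∫ s in (0:ℝ)..(↑p.2 : ℝ), gga K τ W ↑p.1 s|
      ≤ |u₀ ↑p.1| + |∫ s in (0:ℝ)..(↑p.2 : ℝ), gga K τ W ↑p.1 s| := abs_add_le _ _
  _ ≤ M₀ + D * B * T := by
      refine add_le_add (hu₀bd _ p.1.2) ?_
      have h1 := intIntegral_gga_abs_le hΩmeas hKnonneg hKmeas hKint hD hτcont hτb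
        p.1.2 hB0 0 (↑p.2 : ℝ)
      rw [Real.norm_eq_abs] at h1
      have h2 : |(↑p.2 : ℝ) - 0| ≤ T := by
        rw [sub_zero, abs_of_nonneg p.2.2.1]; exact p.2.2.2
      calc |∫ s in (0:ℝ)..(↑p.2 : ℝ), gga K τ W ↑p.1 s| ≤ D * B * |(↑p.2:ℝ) - 0| := h1
      _ ≤ D * B * T := mul_le_mul_of_nonneg_left h2 (by positivity)

include hΩmeas hKnonneg hKmeas hKint hτcont hτb in
lemma gga_ii {x : EuclideanSpace ℝ (Fin n)} (hx : x ∈ Ω) {a b : ℝ}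
    (ha : a ∈ Icc (0:ℝ) T) (hb : b ∈ Icc (0:ℝ) T) :
    IntervalIntegrable (gga K τ W x) volume a b := by
  refine ContinuousOn.intervalIntegrable ?_
  refine (gga_contOn hΩmeas hKnonneg hKmeas hKint hτcont hτb hx).mono ?_
  intro z hz
  rcases hz with ⟨h1, h2⟩
  constructor
  · exact le_trans (le_min ha.1 hb.1) h1
  · exact le_trans h2 (max_le ha.2 hb.2)

include hΩmeas hKnonneg hKmeas hKint hD hτcont hτb in
lemma PhiFun_cont (hT0 : 0 ≤ T)
    (hu₀cont : ContinuousOn u₀ Ω)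
    (hKcont : ∀ x ∈ Ω, ∀ ε > (0:ℝ), ∃ δ > (0:ℝ), ∀ x' ∈ Ω, dist x' x < δ →
        (∫ y in Ω, |K x' y - K x y|) < ε)
    {Lw : ℝ} (hLw0 : 0 ≤ Lw)
    (hτlip : ∀ a b : ℝ, |a| ≤ 2 * ‖W‖ → |b| ≤ 2 * ‖W‖ → |τ a - τ b| ≤ Lw * |a - b|)
    (hB0 : 0 ≤ B) (hD0 : 0 ≤ D) :
    Continuous (PhiFun u₀ K τ W) := by
  -- time-continuity for fixed x
  have hFt : ∀ xh : ↥Ω, Continuous fun th : ↥(Icc (0:ℝ) T) =>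
      ∫ s in (0:ℝ)..(↑th : ℝ), gga K τ W ↑xh s := by
    intro xh
    refine LipschitzWith.continuous (K := Real.toNNReal (D * B))
      (LipschitzWith.of_dist_le_mul fun a b => ?_)
    have hint1 := gga_ii hΩmeas hKnonneg hKmeas hKint hτcont hτb xh.2
      (left_mem_Icc.2 hT0) a.2
    have hint2 := gga_ii hΩmeas hKnonneg hKmeas hKint hτcont hτb xh.2
      (left_mem_Icc.2 hT0) b.2
    have e := intervalIntegral.integral_interval_sub_left hint1 hint2
    rw [Real.dist_eq, e]
    have h1 : ‖∫ s in (↑b:ℝ)..(↑a:ℝ), gga K τ W ↑xh s‖ ≤ D * B * |(↑a:ℝ) - ↑b| :=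
      intIntegral_gga_abs_le hΩmeas hKnonneg hKmeas hKint hD hτcont hτb xh.2 hB0 _ _
    rw [Real.norm_eq_abs] at h1
    calc |∫ s in (↑b:ℝ)..(↑a:ℝ), gga K τ W ↑xh s| ≤ D * B * |(↑a:ℝ) - ↑b| := h1
    _ ≤ Real.toNNReal (D * B) * dist a b := by
        rw [Subtype.dist_eq, Real.dist_eq]
        exact mul_le_mul_of_nonneg_right (Real.le_coe_toNNReal _) (abs_nonneg _)
  set Ψ : ↥Ω → C(↥(Icc (0:ℝ) T), ℝ) := fun xh =>
    ⟨fun th => PhiFun u₀ K τ W (xh, th), by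
      show Continuous fun th : ↥(Icc (0:ℝ) T) => u₀ ↑xh + ∫ s in (0:ℝ)..(↑th:ℝ), gga K τ W ↑xh s
      exact continuous_const.add (hFt xh)⟩ with hΨdef
  set cw : C(↥Ω, C(↥(Icc (0:ℝ) T), ℝ)) := ContinuousMap.curry W.toContinuousMap with hcw
  have hΨ : Continuous Ψ := by
    rw [Metric.continuous_iff]
    intro xh0 ε hε
    obtain ⟨δ₁, hδ₁pos, hδ₁⟩ := Metric.continuousWithinAt_iff.1 (hu₀cont ↑xh0 xh0.2)
      (ε/4) (by positivity)
    obtain ⟨δ₂, hδ₂pos, hδ₂⟩ := hKcont ↑xh0 xh0.2 (ε/(4*(T*B+1))) (by positivity)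
    obtain ⟨δ₃, hδ₃pos, hδ₃⟩ := Metric.continuous_iff.1 cw.continuous xh0
      (ε/(4*(T*(D*Lw)+1))) (by positivity)
    refine ⟨min δ₁ (min δ₂ δ₃), by positivity, fun xh hxd => ?_⟩
    have hdd : dist (↑xh : EuclideanSpace ℝ (Fin n)) ↑xh0 = dist xh xh0 :=
      (Subtype.dist_eq xh xh0).symm
    have hu₀d : dist (u₀ ↑xh) (u₀ ↑xh0) < ε/4 := by
      refine hδ₁ xh.2 ?_
      rw [hdd]; exact lt_of_lt_of_le hxd (min_le_left _ _)
    have hKd : (∫ y in Ω, |K ↑xh y - K ↑xh0 y|) < ε/(4*(T*B+1)) := by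
      refine hδ₂ ↑xh xh.2 ?_
      rw [hdd]; exact lt_of_lt_of_le hxd (le_trans (min_le_right _ _) (min_le_left _ _))
    have hcwd : dist (cw xh) (cw xh0) < ε/(4*(T*(D*Lw)+1)) := by
      refine hδ₃ xh ?_
      exact lt_of_lt_of_le hxd (le_trans (min_le_right _ _) (min_le_right _ _))
    have hKd0 : 0 ≤ ∫ y in Ω, |K ↑xh y - K ↑xh0 y| := integral_nonneg fun y => abs_nonneg _
    -- pointwise-in-s estimate for the difference of the nonlocal terms
    have key : ∀ s ∈ Icc (0:ℝ) T, |gga K τ W ↑xh s - gga K τ W ↑xh0 s| ≤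
        (∫ y in Ω, |K ↑xh y - K ↑xh0 y|) * B + D * (Lw * dist (cw xh) (cw xh0)) := by
      intro s hs
      have hiW := integrand_int hΩmeas hKnonneg hKmeas hKint hτcont hτb xh.2 s
      have hiW₀ := integrand_int hΩmeas hKnonneg hKmeas hKint hτcont hτb xh0.2 s
      have e : gga K τ W ↑xh s - gga K τ W ↑xh0 s =
          ∫ y in Ω, (K ↑xh y * τ (eVa W ↑xh s - eVa W y s) -
                     K ↑xh0 y * τ (eVa W ↑xh0 s - eVa W y s)) := (integral_sub hiW hiW₀).symm
      have hed : |eVa W ↑xh s - eVa W ↑xh0 s| ≤ dist (cw xh) (cw xh0) := by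
        rw [eVa_eq W xh.2 hs, eVa_eq W xh0.2 hs]
        have h1 : dist (cw xh ⟨s, hs⟩) (cw xh0 ⟨s, hs⟩) ≤ dist (cw xh) (cw xh0) :=
          ContinuousMap.dist_apply_le_dist _
        rw [Real.dist_eq] at h1
        exact h1
      have bd : ∀ y : EuclideanSpace ℝ (Fin n),
          ‖K ↑xh y * τ (eVa W ↑xh s - eVa W y s) -
           K ↑xh0 y * τ (eVa W ↑xh0 s - eVa W y s)‖ ≤
          |K ↑xh y - K ↑xh0 y| * B + K ↑xh0 y * (Lw * dist (cw xh) (cw xh0)) := by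
        intro y
        have e2 : K ↑xh y * τ (eVa W ↑xh s - eVa W y s) -
            K ↑xh0 y * τ (eVa W ↑xh0 s - eVa W y s) =
            (K ↑xh y - K ↑xh0 y) * τ (eVa W ↑xh s - eVa W y s) +
            K ↑xh0 y * (τ (eVa W ↑xh s - eVa W y s) - τ (eVa W ↑xh0 s - eVa W y s)) := by
          ring
        rw [e2, Real.norm_eq_abs]
        calc |(K ↑xh y - K ↑xh0 y) * τ (eVa W ↑xh s - eVa W y s) +
            K ↑xh0 y * (τ (eVa W ↑xh s - eVa W y s) - τ (eVa W ↑xh0 s - eVa W y s))|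
            ≤ |(K ↑xh y - K ↑xh0 y) * τ (eVa W ↑xh s - eVa W y s)| +
              |K ↑xh0 y * (τ (eVa W ↑xh s - eVa W y s) - τ (eVa W ↑xh0 s - eVa W y s))| :=
            abs_add_le _ _
        _ ≤ |K ↑xh y - K ↑xh0 y| * B + K ↑xh0 y * (Lw * dist (cw xh) (cw xh0)) := by
            refine add_le_add ?_ ?_
            · rw [abs_mul]
              exact mul_le_mul_of_nonneg_left (hτb _ (arg_le W ↑xh y s)) (abs_nonneg _)
            · rw [abs_mul, abs_of_nonneg (hKnonneg ↑xh0 y)]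
              refine mul_le_mul_of_nonneg_left ?_ (hKnonneg ↑xh0 y)
              have h3 := hτlip _ _ (arg_le W ↑xh y s) (arg_le W ↑xh0 y s)
              have h4 : |(eVa W ↑xh s - eVa W y s) - (eVa W ↑xh0 s - eVa W y s)| =
                  |eVa W ↑xh s - eVa W ↑xh0 s| := by ring_nf
              rw [h4] at h3
              calc |τ (eVa W ↑xh s - eVa W y s) - τ (eVa W ↑xh0 s - eVa W y s)|
                  ≤ Lw * |eVa W ↑xh s - eVa W ↑xh0 s| := h3
              _ ≤ Lw * dist (cw xh) (cw xh0) := mul_le_mul_of_nonneg_left hed hLw0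
      have hbint : Integrable (fun y => |K ↑xh y - K ↑xh0 y| * B +
          K ↑xh0 y * (Lw * dist (cw xh) (cw xh0))) (volume.restrict Ω) := by
        refine Integrable.add ?_ ((hKint ↑xh0 xh0.2).mul_const _)
        exact ((hKint ↑xh xh.2).sub (hKint ↑xh0 xh0.2)).abs.mul_const B
      have h5 : ‖∫ y in Ω, (K ↑xh y * τ (eVa W ↑xh s - eVa W y s) -
          K ↑xh0 y * τ (eVa W ↑xh0 s - eVa W y s))‖ ≤
          ∫ y in Ω, (|K ↑xh y - K ↑xh0 y| * B +
            K ↑xh0 y * (Lw * dist (cw xh) (cw xh0))) :=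
        norm_integral_le_of_norm_le hbint (Filter.Eventually.of_forall bd)
      rw [Real.norm_eq_abs] at h5
      rw [e]
      refine le_trans h5 ?_
      have hKd_int : IntegrableOn (fun y => |K ↑xh y - K ↑xh0 y|) Ω :=
        ((hKint ↑xh xh.2).sub (hKint ↑xh0 xh0.2)).abs
      rw [integral_add (hKd_int.mul_const B) ((hKint ↑xh0 xh0.2).mul_const _),
        integral_mul_const, integral_mul_const]
      refine add_le_add (le_refl _) ?_
      exact mul_le_mul_of_nonneg_right (hD ↑xh0 xh0.2)
        (mul_nonneg hLw0 dist_nonneg)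
    -- assemble: bound the sup-distance
    have hsup : dist (Ψ xh) (Ψ xh0) ≤ ε/4 + T * ((∫ y in Ω, |K ↑xh y - K ↑xh0 y|) * B +
        D * (Lw * dist (cw xh) (cw xh0))) := by
      rw [ContinuousMap.dist_le (by positivity)]
      intro th
      have h6 : Ψ xh th - Ψ xh0 th = (u₀ ↑xh - u₀ ↑xh0) +
          ((∫ s in (0:ℝ)..(↑th:ℝ), gga K τ W ↑xh s) -
           (∫ s in (0:ℝ)..(↑th:ℝ), gga K τ W ↑xh0 s)) := by
        simp only [hΨdef, ContinuousMap.coe_mk, PhiFun]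
        ring
      have hint1 := gga_ii hΩmeas hKnonneg hKmeas hKint hτcont hτb xh.2
        (left_mem_Icc.2 hT0) th.2
      have hint2 := gga_ii hΩmeas hKnonneg hKmeas hKint hτcont hτb xh0.2
        (left_mem_Icc.2 hT0) th.2
      have h7 : ‖∫ s in (0:ℝ)..(↑th:ℝ), (gga K τ W ↑xh s - gga K τ W ↑xh0 s)‖ ≤
          ((∫ y in Ω, |K ↑xh y - K ↑xh0 y|) * B + D * (Lw * dist (cw xh) (cw xh0))) *
            |(↑th:ℝ) - 0| := by
        refine intervalIntegral.norm_integral_le_of_norm_le_const fun s hsm => ?_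
        rw [uIoc_of_le th.2.1] at hsm
        have hsm2 : s ∈ Icc (0:ℝ) T := ⟨hsm.1.le, le_trans hsm.2 th.2.2⟩
        rw [Real.norm_eq_abs]
        exact key s hsm2
      rw [intervalIntegral.integral_sub hint1 hint2] at h7
      rw [Real.dist_eq, h6]
      have h8 : |(↑th:ℝ) - 0| ≤ T := by
        rw [sub_zero, abs_of_nonneg th.2.1]; exact th.2.2
      rw [Real.norm_eq_abs] at h7
      calc |(u₀ ↑xh - u₀ ↑xh0) + ((∫ s in (0:ℝ)..(↑th:ℝ), gga K τ W ↑xh s) -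
           (∫ s in (0:ℝ)..(↑th:ℝ), gga K τ W ↑xh0 s))| ≤
          |u₀ ↑xh - u₀ ↑xh0| + |(∫ s in (0:ℝ)..(↑th:ℝ), gga K τ W ↑xh s) -
           (∫ s in (0:ℝ)..(↑th:ℝ), gga K τ W ↑xh0 s)| := abs_add_le _ _
      _ ≤ ε/4 + T * ((∫ y in Ω, |K ↑xh y - K ↑xh0 y|) * B +
            D * (Lw * dist (cw xh) (cw xh0))) := by
          refine add_le_add ?_ ?_
          · rw [← Real.dist_eq]; exact hu₀d.le
          · calc |(∫ s in (0:ℝ)..(↑th:ℝ), gga K τ W ↑xh s) -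
                (∫ s in (0:ℝ)..(↑th:ℝ), gga K τ W ↑xh0 s)| ≤
                ((∫ y in Ω, |K ↑xh y - K ↑xh0 y|) * B +
                  D * (Lw * dist (cw xh) (cw xh0))) * |(↑th:ℝ) - 0| := h7
            _ ≤ ((∫ y in Ω, |K ↑xh y - K ↑xh0 y|) * B +
                  D * (Lw * dist (cw xh) (cw xh0))) * T := by
                refine mul_le_mul_of_nonneg_left h8 ?_
                positivity
            _ = T * ((∫ y in Ω, |K ↑xh y - K ↑xh0 y|) * B +
                  D * (Lw * dist (cw xh) (cw xh0))) := by ring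
    -- numeric conclusion
    have hb1 : T * ((∫ y in Ω, |K ↑xh y - K ↑xh0 y|) * B) < ε/4 + ε/4 := by
      have h9 : T * ((∫ y in Ω, |K ↑xh y - K ↑xh0 y|) * B) ≤
          (T*B) * (ε/(4*(T*B+1))) := by
        have := mul_le_mul_of_nonneg_left hKd.le (by positivity : (0:ℝ) ≤ T*B)
        nlinarith [this]
      have h10 : (T*B) * (ε/(4*(T*B+1))) < ε/4 + ε/4 := by
        rw [mul_div_assoc']
        rw [div_lt_iff₀ (by positivity)]
        nlinarith [mul_nonneg hT0 hB0, hε]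
      linarith
    have hb2 : T * (D * (Lw * dist (cw xh) (cw xh0))) < ε/4 := by
      have h9 : T * (D * (Lw * dist (cw xh) (cw xh0))) ≤
          (T*(D*Lw)) * (ε/(4*(T*(D*Lw)+1))) := by
        have := mul_le_mul_of_nonneg_left hcwd.le
          (by positivity : (0:ℝ) ≤ T*(D*Lw))
        nlinarith [this]
      have h10 : (T*(D*Lw)) * (ε/(4*(T*(D*Lw)+1))) < ε/4 := by
        rw [mul_div_assoc']
        rw [div_lt_iff₀ (by positivity)]
        nlinarith [mul_nonneg hT0 (mul_nonneg hD0 hLw0), hε]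
      linarith
    calc dist (Ψ xh) (Ψ xh0) ≤ ε/4 + T * ((∫ y in Ω, |K ↑xh y - K ↑xh0 y|) * B +
        D * (Lw * dist (cw xh) (cw xh0))) := hsup
    _ = ε/4 + (T * ((∫ y in Ω, |K ↑xh y - K ↑xh0 y|) * B) +
        T * (D * (Lw * dist (cw xh) (cw xh0)))) := by ring
    _ < ε := by linarith
  have hunc := ContinuousMap.continuous_uncurry_of_continuous ⟨Ψ, hΨ⟩
  exact hunc.congr fun p => rfl

end Phi

end

end Stmt5

/-- Global existence and uniqueness for coordination games.  If `ρ` is a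
recognition function satisfying the coordination condition, then for every `T > 0` the
initial value problem has exactly one bounded continuous solution on `Ω × [0,T]`. -/
theorem statement5
    (n : ℕ) (Ω : Set (EuclideanSpace ℝ (Fin n)))
    (hΩne : Ω.Nonempty) (hΩmeas : MeasurableSet Ω)
    -- `K` is an admissible kernel:
    (K : EuclideanSpace ℝ (Fin n) → EuclideanSpace ℝ (Fin n) → ℝ)
    (hKnonneg : ∀ x y, 0 ≤ K x y)
    (hKmeas : Measurable (Function.uncurry K))
    (hKint : ∀ x ∈ Ω, IntegrableOn (K x) Ω)
    (hKcont : ∀ x ∈ Ω, ∀ ε > (0:ℝ), ∃ δ > (0:ℝ), ∀ x' ∈ Ω, dist x' x < δ →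
        (∫ y in Ω, |K x' y - K x y|) < ε)
    (D : ℝ) (hD : ∀ x ∈ Ω, (∫ y in Ω, K x y) ≤ D)
    -- `ρ` is a recognition function satisfying the coordination condition:
    (ρ : ℝ → ℝ) (hρ : Differentiable ℝ ρ)
    (hρ'lip : ∀ R : ℝ, 0 < R → ∃ L : ℝ, ∀ a b : ℝ, |a| ≤ R → |b| ≤ R →
        |deriv ρ a - deriv ρ b| ≤ L * |a - b|)
    (hcoord_pos : ∀ z : ℝ, 0 ≤ z → deriv ρ z ≤ 0)
    (hcoord_neg : ∀ z : ℝ, z ≤ 0 → 0 ≤ deriv ρ z)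
    -- `u₀` bounded and continuous on `Ω`:
    (u₀ : EuclideanSpace ℝ (Fin n) → ℝ)
    (hu₀cont : ContinuousOn u₀ Ω) (M₀ : ℝ) (hu₀bd : ∀ x ∈ Ω, |u₀ x| ≤ M₀) :
    ∀ T > (0:ℝ), ∃ u : EuclideanSpace ℝ (Fin n) → ℝ → ℝ,
      (ContinuousOn (fun p : EuclideanSpace ℝ (Fin n) × ℝ => u p.1 p.2) (Ω ×ˢ Icc 0 T) ∧
       (∃ M : ℝ, ∀ x ∈ Ω, ∀ t ∈ Icc (0:ℝ) T, |u x t| ≤ M) ∧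
       (∀ x ∈ Ω, ∀ t ∈ Icc (0:ℝ) T,
          u x t = u₀ x + ∫ s in (0:ℝ)..t, ∫ y in Ω, K x y * deriv ρ (u x s - u y s))) ∧
      (∀ v : EuclideanSpace ℝ (Fin n) → ℝ → ℝ,
        ContinuousOn (fun p : EuclideanSpace ℝ (Fin n) × ℝ => v p.1 p.2) (Ω ×ˢ Icc 0 T) →
        (∃ M : ℝ, ∀ x ∈ Ω, ∀ t ∈ Icc (0:ℝ) T, |v x t| ≤ M) →
        (∀ x ∈ Ω, ∀ t ∈ Icc (0:ℝ) T,
          v x t = u₀ x + ∫ s in (0:ℝ)..t, ∫ y in Ω, K x y * deriv ρ (v x s - v y s)) →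
        ∀ x ∈ Ω, ∀ t ∈ Icc (0:ℝ) T, v x t = u x t) := by
  intro T hT
  have hT0 : (0:ℝ) ≤ T := hT.le
  obtain ⟨x₀, hx₀⟩ := hΩne
  haveI : Nonempty ↥Ω := ⟨⟨x₀, hx₀⟩⟩
  haveI : Nonempty ↥(Icc (0:ℝ) T) := ⟨⟨0, left_mem_Icc.2 hT0⟩⟩
  have hM₀ : 0 ≤ M₀ := le_trans (abs_nonneg _) (hu₀bd x₀ hx₀)
  have hD0 : 0 ≤ D :=
    le_trans (setIntegral_nonneg hΩmeas fun y _ => hKnonneg x₀ y) (hD x₀ hx₀)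
  have hρ'0 : deriv ρ 0 = 0 := le_antisymm (hcoord_pos 0 le_rfl) (hcoord_neg 0 le_rfl)
  have hρ'cont : Continuous (deriv ρ) := Stmt5.cont_of_locLip _ hρ'lip
  set R : ℝ := 2*M₀ + 1 with hRdef
  have hR0 : 0 < R := by simp only [hRdef]; linarith
  obtain ⟨L₀, hL₀⟩ := hρ'lip R hR0
  set L : ℝ := max L₀ 0 with hLdef
  have hL0 : 0 ≤ L := le_max_right _ _
  have hLip : ∀ a b : ℝ, |a| ≤ R → |b| ≤ R → |deriv ρ a - deriv ρ b| ≤ L * |a - b| :=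
    fun a b ha hb => le_trans (hL₀ a b ha hb)
      (mul_le_mul_of_nonneg_right (le_max_left _ _) (abs_nonneg _))
  -- the clamp function
  set cl : ℝ → ℝ := fun z => max (-R) (min R z) with hcldef
  have hcl_cont : Continuous cl := continuous_const.max (continuous_const.min continuous_id)
  have hcl_absle : ∀ z, |cl z| ≤ R := by
    intro z
    rw [abs_le]
    constructor
    · exact le_max_left _ _
    · exact max_le (by linarith) (min_le_left _ _)
  have hcl_abs2 : ∀ z, |cl z| ≤ |z| := by
    intro z
    rcases le_total 0 z with h | h
    · have h1 : cl z = min R z := max_eq_right (le_trans (by linarith) (le_min hR0.le h))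
      rw [h1, abs_of_nonneg (le_min hR0.le h), abs_of_nonneg h]
      exact min_le_right _ _
    · have h1 : min R z = z := min_eq_right (le_trans h hR0.le)
      have h2 : cl z = max (-R) z := by rw [hcldef]; simp only [h1]
      rw [h2, abs_of_nonpos (max_le (by linarith) h), abs_of_nonpos h]
      simp only [neg_le_neg_iff]
      exact le_max_right _ _
  have hcl_id : ∀ z, |z| ≤ R → cl z = z := by
    intro z hz
    rw [hcldef]
    simp only []
    rw [min_eq_right (abs_le.1 hz).2, max_eq_right (abs_le.1 hz).1]
  have hcl_nonneg : ∀ z, 0 ≤ z → 0 ≤ cl z := fun z hz =>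
    le_max_of_le_right (le_min hR0.le hz)
  have hcl_nonpos : ∀ z, z ≤ 0 → cl z ≤ 0 := fun z hz =>
    max_le (by linarith) (min_le_of_right_le hz)
  -- the clamped recognition derivative
  set σ : ℝ → ℝ := fun z => deriv ρ (cl z) with hσdef
  have hσcont : Continuous σ := hρ'cont.comp hcl_cont
  have hσabs : ∀ z, |σ z| ≤ L * |cl z| := by
    intro z
    have h1 := hLip (cl z) 0 (hcl_absle z) (by rw [abs_zero]; exact hR0.le)
    rw [hρ'0, sub_zero, sub_zero] at h1
    exact h1
  have hσb : ∀ z, |σ z| ≤ L * R := fun z =>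
    le_trans (hσabs z) (mul_le_mul_of_nonneg_left (hcl_absle z) hL0)
  have hσlip : ∀ a b : ℝ, |σ a - σ b| ≤ L * |a - b| := by
    intro a b
    refine le_trans (hLip (cl a) (cl b) (hcl_absle a) (hcl_absle b))
      (mul_le_mul_of_nonneg_left ?_ hL0)
    -- clamp is 1-Lipschitz
    have h1 := abs_max_sub_max_le_max (-R) (min R a) (-R) (min R b)
    have h2 := abs_min_sub_min_le_max R a R b
    have e1 : max |(-R) - (-R)| |min R a - min R b| = |min R a - min R b| := by
      rw [sub_self, abs_zero]; exact max_eq_right (abs_nonneg _)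
    have e2 : max |R - R| |a - b| = |a - b| := by
      rw [sub_self, abs_zero]; exact max_eq_right (abs_nonneg _)
    rw [e1] at h1; rw [e2] at h2
    exact le_trans h1 h2
  have hσle : ∀ p q s' : ℝ, p ≤ s' → q ≤ s' → σ (p - q) ≤ L * (s' - p) := by
    intro p q s' hp hq
    rcases le_total q p with h | h
    · have h1 := hcoord_pos _ (hcl_nonneg (p - q) (by linarith))
      exact le_trans h1 (mul_nonneg hL0 (by linarith))
    · have h1 : σ (p - q) ≤ |σ (p - q)| := le_abs_self _
      have h2 : |σ (p-q)| ≤ L * |p - q| :=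
        le_trans (hσabs _) (mul_le_mul_of_nonneg_left (hcl_abs2 _) hL0)
      have h4 : |p - q| = q - p := by rw [abs_of_nonpos (by linarith)]; ring
      calc σ (p-q) ≤ L * (q - p) := by rw [← h4]; exact le_trans h1 h2
      _ ≤ L * (s' - p) := mul_le_mul_of_nonneg_left (by linarith) hL0
  set σ' : ℝ → ℝ := fun z => -σ (-z) with hσ'def
  have hσ'cont : Continuous σ' := (hσcont.comp continuous_neg).neg
  have hσ'b : ∀ z, |σ' z| ≤ L * R := by
    intro z
    rw [hσ'def]
    simp only [abs_neg]
    exact hσb (-z)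
  have hσ'lip : ∀ a b : ℝ, |σ' a - σ' b| ≤ L * |a - b| := by
    intro a b
    have h1 := hσlip (-a) (-b)
    have e1 : |σ' a - σ' b| = |σ (-a) - σ (-b)| := by
      rw [hσ'def]; simp only []
      rw [abs_sub_comm]
      congr 1
      ring
    have e2 : |(-a) - (-b)| = |a - b| := by rw [abs_sub_comm]; congr 1; ring
    rw [e1, ← e2]
    exact h1
  have hσ'le : ∀ p q s' : ℝ, p ≤ s' → q ≤ s' → σ' (p - q) ≤ L * (s' - p) := by
    intro p q s' hp hq
    rw [hσ'def]
    simp only []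
    rcases le_total p q with h | h
    · have h1 : -σ (-(p-q)) ≤ |σ (-(p-q))| := neg_le_abs _
      have h2 : |σ (-(p-q))| ≤ L * |(-(p-q))| :=
        le_trans (hσabs _) (mul_le_mul_of_nonneg_left (hcl_abs2 _) hL0)
      rw [abs_of_nonneg (by linarith : (0:ℝ) ≤ -(p-q))] at h2
      have h5 : L * (-(p-q)) ≤ L * (s'-p) :=
        mul_le_mul_of_nonneg_left (by linarith) hL0
      linarith
    · have h1 : 0 ≤ σ (-(p-q)) := hcoord_neg _ (hcl_nonpos _ (by linarith))
      have h2 : 0 ≤ L * (s'-p) := mul_nonneg hL0 (by linarith)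
      linarith
  -- the Picard operator
  set Bσ : ℝ := L * R with hBσdef
  have hBσ0 : 0 ≤ Bσ := mul_nonneg hL0 hR0.le
  have hσbW : ∀ (W : Stmt5.Yt Ω T), ∀ z : ℝ, |z| ≤ 2*‖W‖ → |σ z| ≤ Bσ := fun W z _ => hσb z
  set Φ : Stmt5.Yt Ω T → Stmt5.Yt Ω T := fun W =>
    BoundedContinuousFunction.ofNormedAddCommGroup (Stmt5.PhiFun u₀ K σ W)
      (Stmt5.PhiFun_cont hΩmeas hKnonneg hKmeas hKint hD hσcont (hσbW W) hT0 hu₀cont hKcont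
        hL0 (fun a b _ _ => hσlip a b) hBσ0 hD0)
      (M₀ + D*Bσ*T)
      (Stmt5.PhiFun_bound hΩmeas hKnonneg hKmeas hKint hD hσcont (hσbW W) hu₀bd hBσ0 hT0 hD0)
    with hΦdef
  have hΦapp : ∀ (W : Stmt5.Yt Ω T) (p : ↥Ω × ↥(Icc (0:ℝ) T)),
      Φ W p = u₀ ↑p.1 + ∫ s in (0:ℝ)..(↑p.2 : ℝ), Stmt5.gga K σ W ↑p.1 s := fun W p => rfl
  set cc : ℝ := 2 * L * D with hccdef
  have hcc0 : 0 ≤ cc := mul_nonneg (mul_nonneg (by norm_num) hL0) hD0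
  -- the iterate estimate
  have hiter : ∀ (N : ℕ) (W V : Stmt5.Yt Ω T) (p : ↥Ω × ↥(Icc (0:ℝ) T)),
      |(Φ^[N]) W p - (Φ^[N]) V p| ≤ dist W V * (cc * (↑p.2 : ℝ))^N / ((Nat.factorial N : ℕ) : ℝ) := by
    intro N
    induction N with
    | zero =>
      intro W V p
      simp only [Function.iterate_zero, id_eq, pow_zero, Nat.factorial_zero, Nat.cast_one,
        div_one, mul_one]
      rw [← Real.dist_eq]
      exact BoundedContinuousFunction.dist_coe_le_dist p
    | succ N ih =>
      intro W V p
      rw [Function.iterate_succ_apply', Function.iterate_succ_apply']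
      rw [hΦapp, hΦapp]
      have hiiA := Stmt5.gga_ii hΩmeas hKnonneg hKmeas hKint hσcont (hσbW (Φ^[N] W)) p.1.2
        (left_mem_Icc.2 hT0) p.2.2
      have hiiB := Stmt5.gga_ii hΩmeas hKnonneg hKmeas hKint hσcont (hσbW (Φ^[N] V)) p.1.2
        (left_mem_Icc.2 hT0) p.2.2
      have e : (u₀ ↑p.1 + ∫ s in (0:ℝ)..(↑p.2:ℝ), Stmt5.gga K σ (Φ^[N] W) ↑p.1 s)
          - (u₀ ↑p.1 + ∫ s in (0:ℝ)..(↑p.2:ℝ), Stmt5.gga K σ (Φ^[N] V) ↑p.1 s)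
          = ∫ s in (0:ℝ)..(↑p.2:ℝ),
              (Stmt5.gga K σ (Φ^[N] W) ↑p.1 s - Stmt5.gga K σ (Φ^[N] V) ↑p.1 s) := by
        rw [intervalIntegral.integral_sub hiiA hiiB]; ring
      rw [e]
      have hb : ∀ s ∈ Set.uIoc (0:ℝ) (↑p.2:ℝ),
          ‖Stmt5.gga K σ (Φ^[N] W) ↑p.1 s - Stmt5.gga K σ (Φ^[N] V) ↑p.1 s‖ ≤
          (dist W V * cc^(N+1) / ((Nat.factorial N : ℕ) : ℝ)) * s^N := by
        intro s hs
        rw [Set.uIoc_of_le p.2.2.1] at hs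
        have hs0 : 0 ≤ s := hs.1.le
        set Q : ℝ := dist W V * (cc * s)^N / ((Nat.factorial N : ℕ) : ℝ) with hQdef
        have hQ0 : 0 ≤ Q := div_nonneg (mul_nonneg dist_nonneg
          (pow_nonneg (mul_nonneg hcc0 hs0) N)) (by positivity)
        have hQ : ∀ x', |Stmt5.eVa (Φ^[N] W) x' s - Stmt5.eVa (Φ^[N] V) x' s| ≤ Q := by
          intro x'
          by_cases h : x' ∈ Ω ∧ s ∈ Icc (0:ℝ) T
          · rw [Stmt5.eVa_eq _ h.1 h.2, Stmt5.eVa_eq _ h.1 h.2]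
            exact ih W V (⟨x', h.1⟩, ⟨s, h.2⟩)
          · rw [Stmt5.eVa_of_not _ h, Stmt5.eVa_of_not _ h]
            simpa using hQ0
        have hd := Stmt5.gga_diff hΩmeas hKnonneg hKmeas hKint hD hσcont
          (hσbW (Φ^[N] W)) (hσbW (Φ^[N] V)) hL0 hQ0
          (fun a b _ _ => hσlip a b) p.1.2 hQ
        rw [Real.norm_eq_abs]
        refine le_trans hd ?_
        rw [hQdef, hccdef]
        ring_nf
        apply le_of_eq
        ring
      have hgi : IntervalIntegrable (fun s => (dist W V * cc^(N+1)/((Nat.factorial N : ℕ) : ℝ)) * s^N)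
          volume 0 (↑p.2:ℝ) := (continuous_const.mul (continuous_pow N)).intervalIntegrable _ _
      have h2 := intervalIntegral.norm_integral_le_abs_of_norm_le
        ((ae_restrict_mem measurableSet_uIoc).mono hb) hgi
      rw [Real.norm_eq_abs] at h2
      refine le_trans h2 ?_
      rw [intervalIntegral.integral_const_mul, integral_pow]
      have hfact : ((Nat.factorial (N+1) : ℕ) : ℝ) = (N+1) * ((Nat.factorial N : ℕ) : ℝ) := by
        exact_mod_cast Nat.factorial_succ N
      have ht0 : (0:ℝ) ≤ (↑p.2:ℝ) := p.2.2.1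
      rw [zero_pow (Nat.succ_ne_zero N), sub_zero]
      have hfN : (0:ℝ) < ((Nat.factorial N : ℕ) : ℝ) := by exact_mod_cast Nat.factorial_pos N
      rw [abs_of_nonneg (by positivity)]
      rw [mul_pow, hfact]
      apply le_of_eq
      field_simp
      ring
  -- contraction and fixed point
  obtain ⟨N, hN⟩ : ∃ N : ℕ, (cc*T)^N / ((Nat.factorial N : ℕ) : ℝ) < 1 := by
    have h := FloorSemiring.tendsto_pow_div_factorial_atTop (K := ℝ) (cc*T)
    exact (h.eventually (gt_mem_nhds one_pos)).exists
  set q : ℝ := (cc*T)^N / ((Nat.factorial N : ℕ) : ℝ) with hqdef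
  have hq0 : 0 ≤ q := div_nonneg (pow_nonneg (mul_nonneg hcc0 hT0) N) (by positivity)
  have hcontr : ContractingWith (Real.toNNReal q) (Φ^[N]) := by
    constructor
    · exact Real.toNNReal_lt_one.2 hN
    · refine LipschitzWith.of_dist_le_mul fun W V => ?_
      rw [Real.coe_toNNReal q hq0]
      refine (BoundedContinuousFunction.dist_le (mul_nonneg hq0 dist_nonneg)).2 fun p => ?_
      rw [Real.dist_eq]
      refine le_trans (hiter N W V p) ?_
      have hmono : (cc * (↑p.2:ℝ))^N ≤ (cc*T)^N :=
        pow_le_pow_left₀ (mul_nonneg hcc0 p.2.2.1)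
          (mul_le_mul_of_nonneg_left p.2.2.2 hcc0) N
      calc dist W V * (cc * (↑p.2:ℝ))^N / ((Nat.factorial N : ℕ) : ℝ)
          ≤ dist W V * (cc*T)^N / ((Nat.factorial N : ℕ) : ℝ) := by gcongr
      _ = q * dist W V := by rw [hqdef]; ring
  haveI : Nonempty (Stmt5.Yt Ω T) := ⟨0⟩
  set w : Stmt5.Yt Ω T := ContractingWith.fixedPoint (Φ^[N]) hcontr with hwdef
  have hwit : Function.IsFixedPt (Φ^[N]) w := hcontr.fixedPoint_isFixedPt
  have hwfix : Φ w = w := hcontr.isFixedPt_fixedPoint_iterate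
  have huniq : ∀ z : Stmt5.Yt Ω T, Φ z = z → z = w := fun z hz =>
    hcontr.fixedPoint_unique' (Function.IsFixedPt.iterate hz N) hwit
  have hweq : ∀ p : ↥Ω × ↥(Icc (0:ℝ) T),
      w p = u₀ ↑p.1 + ∫ s in (0:ℝ)..(↑p.2:ℝ), Stmt5.gga K σ w ↑p.1 s := by
    intro p
    have h := hΦapp w p
    rw [hwfix] at h
    exact h
  -- the generalized integral equation
  have heqgen : ∀ (τ : ℝ → ℝ), Continuous τ → ∀ (W : Stmt5.Yt Ω T) (Bw : ℝ),
      (∀ z : ℝ, |z| ≤ 2*‖W‖ → |τ z| ≤ Bw) → ∀ (ub : EuclideanSpace ℝ (Fin n) → ℝ),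
      (∀ p : ↥Ω × ↥(Icc (0:ℝ) T),
        W p = ub ↑p.1 + ∫ s in (0:ℝ)..(↑p.2:ℝ), Stmt5.gga K τ W ↑p.1 s) →
      ∀ x, x ∈ Ω → ∀ t₀ t : ℝ, 0 ≤ t₀ → t₀ ≤ t → t ≤ T →
      Stmt5.eVa W x t = Stmt5.eVa W x t₀ + ∫ s in t₀..t, Stmt5.gga K τ W x s := by
    intro τ hτc W Bw hτbw ub hW x hx t₀ t h0 h1 h2
    have ht₀Icc : t₀ ∈ Icc (0:ℝ) T := ⟨h0, h1.trans h2⟩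
    have htIcc : t ∈ Icc (0:ℝ) T := ⟨h0.trans h1, h2⟩
    rw [Stmt5.eVa_eq W hx htIcc, Stmt5.eVa_eq W hx ht₀Icc,
      hW (⟨x,hx⟩,⟨t,htIcc⟩), hW (⟨x,hx⟩,⟨t₀,ht₀Icc⟩)]
    have hadd := intervalIntegral.integral_add_adjacent_intervals
      (Stmt5.gga_ii hΩmeas hKnonneg hKmeas hKint hτc hτbw hx (left_mem_Icc.2 hT0) ht₀Icc)
      (Stmt5.gga_ii hΩmeas hKnonneg hKmeas hKint hτc hτbw hx ht₀Icc htIcc)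
    simp only at hadd ⊢
    linarith [hadd]
  -- the abstract supremum bound
  have hsupb : ∀ (τ : ℝ → ℝ), Continuous τ → ∀ (W : Stmt5.Yt Ω T) (Bw : ℝ), 0 ≤ Bw →
      ∀ (hτbw : ∀ z : ℝ, |z| ≤ 2*‖W‖ → |τ z| ≤ Bw), ∀ (Lτ : ℝ), 0 ≤ Lτ →
      (∀ p q s' : ℝ, |p| ≤ ‖W‖ → |q| ≤ ‖W‖ → p ≤ s' → q ≤ s' →
        τ (p - q) ≤ Lτ * (s' - p)) →
      (∀ x, x ∈ Ω → ∀ t₀ t : ℝ, 0 ≤ t₀ → t₀ ≤ t → t ≤ T →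
        Stmt5.eVa W x t = Stmt5.eVa W x t₀ + ∫ s in t₀..t, Stmt5.gga K τ W x s) →
      ∀ x, x ∈ Ω → ∀ t ∈ Icc (0:ℝ) T,
        Stmt5.eVa W x t ≤ ⨆ i : ↥Ω, Stmt5.eVa W ↑i 0 := by
    intro τ hτc W Bw hBw0 hτbw Lτ hLτ0 hle heqW x hx t ht
    have hbdd : ∀ t' : ℝ, BddAbove (range fun i : ↥Ω => Stmt5.eVa W ↑i t') := by
      intro t'
      refine ⟨‖W‖, ?_⟩
      rintro _ ⟨j, rfl⟩
      exact le_trans (le_abs_self _) (Stmt5.eVa_abs_le W ↑j t')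
    have hmain := sup_gronwall (ι := ↥Ω) (T := T) (c := D*Lτ) (C := D*Bw)
      (mul_nonneg hD0 hLτ0) (mul_nonneg hD0 hBw0)
      (fun (i : ↥Ω) (t : ℝ) => Stmt5.eVa W ↑i t)
      (fun (i : ↥Ω) (t : ℝ) => Stmt5.gga K τ W ↑i t)
      (fun t' _ => hbdd t')
      (fun i t₀ t' h0 h1 h2 => Stmt5.gga_ii hΩmeas hKnonneg hKmeas hKint hτc hτbw i.2
        ⟨h0, h1.trans h2⟩ ⟨h0.trans h1, h2⟩)
      (fun i t₀ t' h0 h1 h2 => heqW ↑i i.2 t₀ t' h0 h1 h2)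
      (fun i t' _ => Stmt5.gga_abs_le hΩmeas hKnonneg hKmeas hKint hD hτc hτbw i.2 hBw0 t')
      (fun i t' _ => Stmt5.gga_le_sup hΩmeas hKnonneg hKmeas hKint hD hτc hτbw hLτ0 hD0
        hle i.2 t')
    exact le_trans (le_ciSup (hbdd t) (⟨x,hx⟩ : ↥Ω)) (hmain t ht)
  -- upper bound for w
  have hzeroIcc : (0:ℝ) ∈ Icc (0:ℝ) T := left_mem_Icc.2 hT0
  have hup : ∀ x, x ∈ Ω → ∀ t ∈ Icc (0:ℝ) T, Stmt5.eVa w x t ≤ M₀ := by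
    intro x hx t ht
    have h1 := hsupb σ hσcont w Bσ hBσ0 (hσbW w) L hL0
      (fun p q s' _ _ hp hq => hσle p q s' hp hq)
      (heqgen σ hσcont w Bσ (hσbW w) u₀ hweq) x hx t ht
    refine le_trans h1 (ciSup_le fun i => ?_)
    have h2 : Stmt5.eVa w ↑i 0 = u₀ ↑i := by
      rw [Stmt5.eVa_eq w i.2 hzeroIcc, hweq (i, ⟨0, hzeroIcc⟩)]
      simp [intervalIntegral.integral_same]
    rw [h2]
    exact le_trans (le_abs_self _) (hu₀bd ↑i i.2)
  -- lower bound for w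
  have hweq' : ∀ p : ↥Ω × ↥(Icc (0:ℝ) T),
      (-w) p = (fun x => -u₀ x) ↑p.1 +
        ∫ s in (0:ℝ)..(↑p.2:ℝ), Stmt5.gga K σ' (-w) ↑p.1 s := by
    intro p
    have h1 : ∀ s : ℝ, Stmt5.gga K σ' (-w) (↑p.1) s = - Stmt5.gga K σ w ↑p.1 s := by
      intro s
      rw [hσ'def]
      exact Stmt5.gga_neg σ w ↑p.1 s
    have h2 : (-w) p = -(w p) := rfl
    rw [h2, hweq p]
    simp only [h1]
    rw [intervalIntegral.integral_neg]
    ring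
  have hlow : ∀ x, x ∈ Ω → ∀ t ∈ Icc (0:ℝ) T, Stmt5.eVa (-w) x t ≤ M₀ := by
    intro x hx t ht
    have h1 := hsupb σ' hσ'cont (-w) Bσ hBσ0 (fun z _ => hσ'b z) L hL0
      (fun p q s' _ _ hp hq => hσ'le p q s' hp hq)
      (heqgen σ' hσ'cont (-w) Bσ (fun z _ => hσ'b z) (fun x => -u₀ x) hweq') x hx t ht
    refine le_trans h1 (ciSup_le fun i => ?_)
    have h2 : Stmt5.eVa (-w) ↑i 0 = -u₀ ↑i := by
      rw [Stmt5.eVa_eq _ i.2 hzeroIcc, hweq' (i, ⟨0, hzeroIcc⟩)]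
      simp [intervalIntegral.integral_same]
    rw [h2]
    have h5 := abs_le.1 (hu₀bd ↑i i.2)
    linarith [h5.1]
  have hwbd : ∀ x, x ∈ Ω → ∀ t ∈ Icc (0:ℝ) T, |Stmt5.eVa w x t| ≤ M₀ := by
    intro x hx t ht
    rw [abs_le]
    refine ⟨?_, hup x hx t ht⟩
    have h1 := hlow x hx t ht
    rw [Stmt5.eVa_neg] at h1
    linarith
  -- removing the clamp
  have hggeq : ∀ (W : Stmt5.Yt Ω T),
      (∀ x, x ∈ Ω → ∀ t ∈ Icc (0:ℝ) T, |Stmt5.eVa W x t| ≤ M₀) →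
      ∀ x, x ∈ Ω → ∀ s ∈ Icc (0:ℝ) T,
      Stmt5.gga K σ W x s =
        ∫ y in Ω, K x y * deriv ρ (Stmt5.eVa W x s - Stmt5.eVa W y s) := by
    intro W hWbd x hx s hs
    simp only [Stmt5.gga]
    refine setIntegral_congr_fun hΩmeas fun y hy => ?_
    have harg : |Stmt5.eVa W x s - Stmt5.eVa W y s| ≤ R := by
      have h1 := hWbd x hx s hs
      have h2 := hWbd y hy s hs
      have h3 := abs_sub (Stmt5.eVa W x s) (Stmt5.eVa W y s)
      rw [hRdef]
      linarith
    have h4 : σ (Stmt5.eVa W x s - Stmt5.eVa W y s) =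
        deriv ρ (Stmt5.eVa W x s - Stmt5.eVa W y s) := by
      rw [hσdef]
      simp only []
      rw [hcl_id _ harg]
    rw [h4]
  have hsol : ∀ x, x ∈ Ω → ∀ t ∈ Icc (0:ℝ) T,
      Stmt5.eVa w x t = u₀ x + ∫ s in (0:ℝ)..t, ∫ y in Ω,
        K x y * deriv ρ (Stmt5.eVa w x s - Stmt5.eVa w y s) := by
    intro x hx t ht
    rw [Stmt5.eVa_eq w hx ht, hweq (⟨x,hx⟩,⟨t,ht⟩)]
    congr 1
    refine intervalIntegral.integral_congr fun s hs => ?_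
    rw [uIcc_of_le ht.1] at hs
    exact hggeq w hwbd x hx s ⟨hs.1, hs.2.trans ht.2⟩
  -- assemble the answer
  refine ⟨fun x t => Stmt5.eVa w x t, ⟨?_, ⟨M₀, fun x hx t ht => hwbd x hx t ht⟩,
    fun x hx t ht => hsol x hx t ht⟩, ?_⟩
  · -- continuity
    rw [continuousOn_iff_continuous_restrict]
    have hm : Continuous (fun q : ↥(Ω ×ˢ Icc (0:ℝ) T) =>
        ((⟨(q : EuclideanSpace ℝ (Fin n) × ℝ).1, (mem_prod.1 q.2).1⟩ : ↥Ω),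
         (⟨(q : EuclideanSpace ℝ (Fin n) × ℝ).2, (mem_prod.1 q.2).2⟩ : ↥(Icc (0:ℝ) T)))) := by
      refine Continuous.prodMk ?_ ?_
      · exact Continuous.subtype_mk (continuous_fst.comp continuous_subtype_val) _
      · exact Continuous.subtype_mk (continuous_snd.comp continuous_subtype_val) _
    refine (w.continuous.comp hm).congr fun q => ?_
    exact (Stmt5.eVa_eq w _ _).symm
  · -- uniqueness
    rintro v hvcont ⟨Mv, hvbd⟩ hveq x hx t ht
    have hVcont : Continuous (fun p : ↥Ω × ↥(Icc (0:ℝ) T) => v ↑p.1 ↑p.2) := by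
      have hm : Continuous (fun p : ↥Ω × ↥(Icc (0:ℝ) T) =>
          (⟨(↑p.1, ↑p.2), mem_prod.2 ⟨p.1.2, p.2.2⟩⟩ : ↥(Ω ×ˢ Icc (0:ℝ) T))) :=
        Continuous.subtype_mk (Continuous.prodMk
          (continuous_subtype_val.comp continuous_fst)
          (continuous_subtype_val.comp continuous_snd)) _
      exact (continuousOn_iff_continuous_restrict.1 hvcont).comp hm
    set V : Stmt5.Yt Ω T := BoundedContinuousFunction.ofNormedAddCommGroup _ hVcont Mv
      (fun p => by rw [Real.norm_eq_abs]; exact hvbd ↑p.1 p.1.2 ↑p.2 p.2.2) with hVdef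
    have hevV : ∀ x', x' ∈ Ω → ∀ t', ∀ ht' : t' ∈ Icc (0:ℝ) T,
        Stmt5.eVa V x' t' = v x' t' := by
      intro x' hx' t' ht'
      rw [Stmt5.eVa_eq V hx' ht']
      rfl
    set Rv : ℝ := 2*‖V‖ + 1 with hRvdef
    have hRv0 : 0 < Rv := by
      have := norm_nonneg V
      rw [hRvdef]; linarith
    obtain ⟨Lv₀, hLv₀⟩ := hρ'lip Rv hRv0
    set Lv : ℝ := max Lv₀ 0 with hLvdef
    have hLv0 : 0 ≤ Lv := le_max_right _ _
    have hLvip : ∀ a b : ℝ, |a| ≤ Rv → |b| ≤ Rv → |deriv ρ a - deriv ρ b| ≤ Lv * |a-b| :=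
      fun a b ha hb => le_trans (hLv₀ a b ha hb)
        (mul_le_mul_of_nonneg_right (le_max_left _ _) (abs_nonneg _))
    set Bv : ℝ := Lv * Rv with hBvdef
    have hBv0 : 0 ≤ Bv := mul_nonneg hLv0 hRv0.le
    have h2V : (2:ℝ)*‖V‖ ≤ Rv := by rw [hRvdef]; linarith
    have hρ'bV : ∀ z : ℝ, |z| ≤ 2*‖V‖ → |deriv ρ z| ≤ Bv := by
      intro z hz
      have h1 := hLvip z 0 (le_trans hz h2V) (by rw [abs_zero]; exact hRv0.le)
      rw [hρ'0, sub_zero, sub_zero] at h1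
      exact le_trans h1 (mul_le_mul_of_nonneg_left (le_trans hz h2V) hLv0)
    have hρ'leV : ∀ p q s' : ℝ, |p| ≤ ‖V‖ → |q| ≤ ‖V‖ → p ≤ s' → q ≤ s' →
        deriv ρ (p - q) ≤ Lv * (s' - p) := by
      intro p q s' hp hq hps hqs
      rcases le_total q p with h | h
      · exact le_trans (hcoord_pos _ (by linarith))
          (mul_nonneg hLv0 (by linarith))
      · have hpq : |p - q| ≤ Rv := by
          have := abs_sub p q
          have := abs_le.1 hp; have := abs_le.1 hq
          rw [hRvdef]
          have h5 : |p - q| ≤ |p| + |q| := abs_sub p q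
          linarith
        have h1 := hLvip (p-q) 0 hpq (by rw [abs_zero]; exact hRv0.le)
        rw [hρ'0, sub_zero, sub_zero] at h1
        have h2 : |p - q| = q - p := by rw [abs_of_nonpos (by linarith)]; ring
        calc deriv ρ (p-q) ≤ |deriv ρ (p-q)| := le_abs_self _
        _ ≤ Lv * (q-p) := by rw [← h2]; exact h1
        _ ≤ Lv * (s'-p) := mul_le_mul_of_nonneg_left (by linarith) hLv0
    set ρneg : ℝ → ℝ := fun z => -(deriv ρ (-z)) with hρnegdef
    have hρnegcont : Continuous ρneg := (hρ'cont.comp continuous_neg).neg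
    have hρnegbV : ∀ z : ℝ, |z| ≤ 2*‖(-V : Stmt5.Yt Ω T)‖ → |ρneg z| ≤ Bv := by
      intro z hz
      rw [norm_neg] at hz
      rw [hρnegdef]
      simp only [abs_neg]
      exact hρ'bV (-z) (by rw [abs_neg]; exact hz)
    have hρnegleV : ∀ p q s' : ℝ, |p| ≤ ‖(-V : Stmt5.Yt Ω T)‖ →
        |q| ≤ ‖(-V : Stmt5.Yt Ω T)‖ → p ≤ s' → q ≤ s' →
        ρneg (p - q) ≤ Lv * (s' - p) := by
      intro p q s' hp hq hps hqs
      rw [norm_neg] at hp hq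
      rw [hρnegdef]
      simp only []
      rcases le_total p q with h | h
      · have h1 : -(deriv ρ (-(p-q))) ≤ |deriv ρ (-(p-q))| := neg_le_abs _
        have hb : |(-(p-q))| ≤ Rv := by
          rw [abs_neg]
          have h5 : |p - q| ≤ |p| + |q| := abs_sub p q
          have := abs_le.1 hp; have := abs_le.1 hq
          rw [hRvdef]; linarith
        have h2 := hLvip (-(p-q)) 0 hb (by rw [abs_zero]; exact hRv0.le)
        rw [hρ'0, sub_zero, sub_zero] at h2
        rw [abs_of_nonneg (by linarith : (0:ℝ) ≤ -(p-q))] at h2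
        have h5 : Lv * (-(p-q)) ≤ Lv * (s'-p) :=
          mul_le_mul_of_nonneg_left (by linarith) hLv0
        linarith
      · have h1 : 0 ≤ deriv ρ (-(p-q)) := hcoord_neg _ (by linarith)
        have h2 : 0 ≤ Lv * (s'-p) := mul_nonneg hLv0 (by linarith)
        linarith
    -- V satisfies the unclamped equation in gga form
    have hVeq : ∀ p : ↥Ω × ↥(Icc (0:ℝ) T),
        V p = u₀ ↑p.1 + ∫ s in (0:ℝ)..(↑p.2:ℝ), Stmt5.gga K (deriv ρ) V ↑p.1 s := by
      intro p
      have h1 := hveq ↑p.1 p.1.2 ↑p.2 p.2.2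
      have h2 : V p = v ↑p.1 ↑p.2 := rfl
      rw [h2, h1]
      congr 1
      refine intervalIntegral.integral_congr fun s hs => ?_
      rw [uIcc_of_le p.2.2.1] at hs
      have hs' : s ∈ Icc (0:ℝ) T := ⟨hs.1, hs.2.trans p.2.2.2⟩
      simp only [Stmt5.gga]
      refine setIntegral_congr_fun hΩmeas fun y hy => ?_
      rw [hevV ↑p.1 p.1.2 s hs', hevV y hy s hs']
    have hVeq' : ∀ p : ↥Ω × ↥(Icc (0:ℝ) T),
        (-V) p = (fun x => -u₀ x) ↑p.1 +
          ∫ s in (0:ℝ)..(↑p.2:ℝ), Stmt5.gga K ρneg (-V) ↑p.1 s := by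
      intro p
      have h1 : ∀ s : ℝ, Stmt5.gga K ρneg (-V) (↑p.1) s =
          - Stmt5.gga K (deriv ρ) V ↑p.1 s := by
        intro s
        rw [hρnegdef]
        exact Stmt5.gga_neg (deriv ρ) V ↑p.1 s
      have h2 : (-V) p = -(V p) := rfl
      rw [h2, hVeq p]
      simp only [h1]
      rw [intervalIntegral.integral_neg]
      ring
    have hupV : ∀ x', x' ∈ Ω → ∀ t' ∈ Icc (0:ℝ) T, Stmt5.eVa V x' t' ≤ M₀ := by
      intro x' hx' t' ht'
      have h1 := hsupb (deriv ρ) hρ'cont V Bv hBv0 hρ'bV Lv hLv0 hρ'leV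
        (heqgen (deriv ρ) hρ'cont V Bv hρ'bV u₀ hVeq) x' hx' t' ht'
      refine le_trans h1 (ciSup_le fun i => ?_)
      have h2 : Stmt5.eVa V ↑i 0 = u₀ ↑i := by
        rw [Stmt5.eVa_eq V i.2 hzeroIcc, hVeq (i, ⟨0, hzeroIcc⟩)]
        simp [intervalIntegral.integral_same]
      rw [h2]
      exact le_trans (le_abs_self _) (hu₀bd ↑i i.2)
    have hlowV : ∀ x', x' ∈ Ω → ∀ t' ∈ Icc (0:ℝ) T, Stmt5.eVa (-V) x' t' ≤ M₀ := by
      intro x' hx' t' ht'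
      have h1 := hsupb ρneg hρnegcont (-V) Bv hBv0 hρnegbV Lv hLv0 hρnegleV
        (heqgen ρneg hρnegcont (-V) Bv hρnegbV (fun x => -u₀ x) hVeq') x' hx' t' ht'
      refine le_trans h1 (ciSup_le fun i => ?_)
      have h2 : Stmt5.eVa (-V) ↑i 0 = -u₀ ↑i := by
        rw [Stmt5.eVa_eq _ i.2 hzeroIcc, hVeq' (i, ⟨0, hzeroIcc⟩)]
        simp [intervalIntegral.integral_same]
      rw [h2]
      have h5 := abs_le.1 (hu₀bd ↑i i.2)
      linarith [h5.1]
    have hVbd : ∀ x', x' ∈ Ω → ∀ t' ∈ Icc (0:ℝ) T, |Stmt5.eVa V x' t'| ≤ M₀ := by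
      intro x' hx' t' ht'
      rw [abs_le]
      refine ⟨?_, hupV x' hx' t' ht'⟩
      have h1 := hlowV x' hx' t' ht'
      rw [Stmt5.eVa_neg] at h1
      linarith
    -- V is a fixed point of Φ
    have hΦV : Φ V = V := by
      ext p
      rw [hΦapp V p, hVeq p]
      congr 1
      refine intervalIntegral.integral_congr fun s hs => ?_
      rw [uIcc_of_le p.2.2.1] at hs
      have hs' : s ∈ Icc (0:ℝ) T := ⟨hs.1, hs.2.trans p.2.2.2⟩
      rw [hggeq V hVbd ↑p.1 p.1.2 s hs']
      simp only [Stmt5.gga]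
    have hVw : V = w := huniq V hΦV
    have h3 : v x t = V (⟨x,hx⟩,⟨t,ht⟩) := rfl
    rw [h3, hVw]
    exact (Stmt5.eVa_eq w hx ht).symm
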